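/- Fix an integer A ≥ 2 and Δ ∈ (0, 1/4]. On a probability space, let (X_{a,t})_{a ∈ {1,…,A}, t ∈ ℕ} be independent {0,1}-valued random variables with P(X_{1,t} = 1) = 1/2 + Δ and P(X_{a,t} = 1) = 1/2 for every a ≥ 2 and t. Consider any pure-exploitation greedy algorithm with warm-start L = 1: it pulls a_t := t for t ∈ {1, …, A}, and for every t > A the pull a_t is measurable with respect to the history σ((a_s, X_{a_s,s})_{s < t}) and satisfies μ̂_{a_t}(t) = max_{a} μ̂_a(t), where μ̂_a(t) := (∑_{s < t, a_s = a} X_{a,s}) / #{s < t : a_s = a} is the empirical mean from the algorithm's own pulls. Define the regret Regret(T) := ∑_{t=1}^{T} (μ_1 − μ_{a_t}) with μ_1 = 1/2 + Δ and μ_a = 1/2 for a ≥ 2. Then for every T ≥ A, E[Regret(T)] ≥ (1/2 − Δ)(1 − 2^{−(A−1)}) Δ (T − A). -/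

import Mathlib

open MeasureTheory ProbabilityTheory Finset

/-- **Linear regret of pure-exploitation greedy with warm-start `L = 1`.**
Arms are indexed by `Fin A` with arm `⟨0,_⟩` the optimal arm (Bernoulli mean
`1/2 + Δ`) and all other arms having mean `1/2`, all samples independent.
The algorithm pulls each arm once during rounds `1, …, A`, and afterwards
always pulls an arm with maximal empirical mean (measurably in the history).
Then for every `T ≥ A`, the expected regret is at least
`(1/2 − Δ)(1 − 2^{−(A−1)}) Δ (T − A)`. -/
theorem peg_linear_regret_warmstart_one
    {Ω : Type*} [MeasurableSpace Ω] (μ : Measure Ω) [IsProbabilityMeasure μ]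
    (A : ℕ) (hA : 2 ≤ A)
    (Δ : ℝ) (hΔ0 : 0 < Δ) (hΔ1 : Δ ≤ 1 / 4)
    (X : Fin A × ℕ → Ω → ℝ)
    (hXmeas : ∀ p, Measurable (X p))
    (hX01 : ∀ p ω, X p ω = 0 ∨ X p ω = 1)
    (hindep : iIndepFun X μ)
    (hmean1 : ∀ t, μ {ω | X (⟨0, by omega⟩, t) ω = 1} = ENNReal.ofReal (1 / 2 + Δ))
    (hmean2 : ∀ a : Fin A, a ≠ ⟨0, by omega⟩ →
      ∀ t, μ {ω | X (a, t) ω = 1} = ENNReal.ofReal (1 / 2))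
    (aSel : ℕ → Ω → Fin A)
    (hwarm : ∀ t, ∀ _h1 : 1 ≤ t, ∀ _h2 : t ≤ A, ∀ ω, aSel t ω = ⟨t - 1, by omega⟩)
    (hhist : ∀ t, A < t →
      Measurable[⨆ s ∈ Finset.Ico 1 t, MeasurableSpace.comap
        (fun ω => (aSel s ω, X (aSel s ω, s) ω)) inferInstance] (aSel t))
    (hgreedy : ∀ t, A < t → ∀ ω,
      (∑ s ∈ (Finset.Ico 1 t).filter (fun s => aSel s ω = aSel t ω),
            X (aSel t ω, s) ω)
          / ((Finset.Ico 1 t).filter (fun s => aSel s ω = aSel t ω)).card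
        = ⨆ a : Fin A,
            (∑ s ∈ (Finset.Ico 1 t).filter (fun s => aSel s ω = a), X (a, s) ω)
              / ((Finset.Ico 1 t).filter (fun s => aSel s ω = a)).card)
    (T : ℕ) (hT : A ≤ T) :
    (1 / 2 - Δ) * (1 - (1 / 2 : ℝ) ^ (A - 1)) * Δ * ((T : ℝ) - A)
      ≤ ∫ ω, (∑ t ∈ Finset.Icc 1 T,
          ((1 / 2 + Δ)
            - (if aSel t ω = (⟨0, by omega⟩ : Fin A) then 1 / 2 + Δ else 1 / 2))) ∂μ := by
  classical
  have hA0 : 0 < A := by omega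
  set z : Fin A := ⟨0, hA0⟩ with hzdef
  show (1 / 2 - Δ) * (1 - (1 / 2 : ℝ) ^ (A - 1)) * Δ * ((T : ℝ) - A)
      ≤ ∫ ω, (∑ t ∈ Finset.Icc 1 T,
          ((1 / 2 + Δ) - (if aSel t ω = z then 1 / 2 + Δ else 1 / 2))) ∂μ
  -- measurability of the selected reward
  have hXsel : ∀ s : ℕ, Measurable (aSel s) → Measurable (fun ω => X (aSel s ω, s) ω) := by
    intro s hs
    have h1 : (fun ω => X (aSel s ω, s) ω)
        = fun ω => ∑ a : Fin A, if aSel s ω = a then X (a, s) ω else 0 := by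
      funext ω
      rw [Finset.sum_ite_eq]
      simp
    rw [h1]
    exact Finset.measurable_sum _ fun a _ =>
      Measurable.ite (hs (measurableSet_singleton a)) (hXmeas _) measurable_const
  -- measurability of the selections
  have hmeas_a : ∀ t, 1 ≤ t → Measurable (aSel t) := by
    intro t
    induction t using Nat.strong_induction_on with
    | _ t IH =>
      intro ht1
      by_cases htA : t ≤ A
      · have h2 : aSel t = fun _ => (⟨t - 1, by omega⟩ : Fin A) := funext (hwarm t ht1 htA)
        rw [h2]; exact measurable_const
      · push_neg at htA
        refine (hhist t htA).mono ?_ le_rfl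
        refine iSup₂_le fun s hs => ?_
        rw [Finset.mem_Ico] at hs
        have has : Measurable (aSel s) := IH s hs.2 hs.1
        exact Measurable.comap_le (has.prodMk (hXsel s has))
  -- deterministic core: on the bad warm-start event, arm z is never pulled after time A
  have hdet : ∀ ω, X (z, 1) ω = 0 → (∃ b : Fin A, b ≠ z ∧ X (b, (b : ℕ) + 1) ω = 1) →
      ∀ t, A < t → aSel t ω ≠ z := by
    rintro ω h0 ⟨b, hbz, hb1⟩ t
    induction t using Nat.strong_induction_on with
    | _ t IH =>
      intro htA hcon
      have hwz : aSel 1 ω = z := by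
        rw [hwarm 1 le_rfl (by omega) ω]
      have hfz : (Finset.Ico 1 t).filter (fun s => aSel s ω = z) = {1} := by
        ext s
        simp only [Finset.mem_filter, Finset.mem_Ico, Finset.mem_singleton]
        constructor
        · rintro ⟨⟨hs1, hst⟩, hsz⟩
          by_cases hsA : s ≤ A
          · rw [hwarm s hs1 hsA ω] at hsz
            have hval : s - 1 = 0 := congrArg Fin.val hsz
            omega
          · exact absurd hsz (IH s hst (by omega))
        · rintro rfl
          exact ⟨⟨le_rfl, by omega⟩, hwz⟩
      have hg := hgreedy t htA ω
      rw [hcon, hfz] at hg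
      simp only [Finset.sum_singleton, Finset.card_singleton] at hg
      rw [h0] at hg
      set m : Fin A → ℝ := fun a =>
        (∑ s ∈ (Finset.Ico 1 t).filter (fun s => aSel s ω = a), X (a, s) ω)
          / ((Finset.Ico 1 t).filter (fun s => aSel s ω = a)).card with hm
      have hble : m b ≤ ⨆ a, m a := le_ciSup ((Set.finite_range m).bddAbove) b
      have hbmem : (b : ℕ) + 1 ∈ (Finset.Ico 1 t).filter (fun s => aSel s ω = b) := by
        rw [Finset.mem_filter, Finset.mem_Ico]
        refine ⟨⟨by omega, by have := b.isLt; omega⟩, ?_⟩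
        rw [hwarm ((b : ℕ) + 1) (by omega) (by have := b.isLt; omega) ω]
        exact Fin.ext (by simp)
      have hsum : (1 : ℝ) ≤ ∑ s ∈ (Finset.Ico 1 t).filter (fun s => aSel s ω = b), X (b, s) ω := by
        calc (1 : ℝ) = X (b, (b : ℕ) + 1) ω := hb1.symm
          _ ≤ _ := Finset.single_le_sum (f := fun s => X (b, s) ω)
              (fun i _ => by rcases hX01 (b, i) ω with h | h <;> simp [h]) hbmem
      have hcard : (0 : ℝ) < (((Finset.Ico 1 t).filter (fun s => aSel s ω = b)).card : ℝ) := by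
        have h1 : 0 < ((Finset.Ico 1 t).filter (fun s => aSel s ω = b)).card :=
          Finset.card_pos.mpr ⟨_, hbmem⟩
        exact_mod_cast h1
      have hmb : 0 < m b := div_pos (by linarith) hcard
      rw [← hg] at hble
      norm_num at hble
      linarith
  -- probability computations
  have hcomp : ∀ p : Fin A × ℕ, X p ⁻¹' ({0} : Set ℝ) = (X p ⁻¹' ({1} : Set ℝ))ᶜ := by
    intro p; ext ω
    simp only [Set.mem_preimage, Set.mem_singleton_iff, Set.mem_compl_iff]
    rcases hX01 p ω with h | h <;> simp [h]
  have hmeas1set : ∀ p : Fin A × ℕ, MeasurableSet (X p ⁻¹' ({1} : Set ℝ)) := fun p =>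
    hXmeas p (measurableSet_singleton 1)
  have hmeas0set : ∀ p : Fin A × ℕ, MeasurableSet (X p ⁻¹' ({0} : Set ℝ)) := fun p =>
    hXmeas p (measurableSet_singleton 0)
  have hμ0z : μ (X (z, 1) ⁻¹' ({0} : Set ℝ)) = ENNReal.ofReal (1 / 2 - Δ) := by
    have h1 : μ (X (z, 1) ⁻¹' ({1} : Set ℝ)) = ENNReal.ofReal (1 / 2 + Δ) := hmean1 1
    rw [hcomp, prob_compl_eq_one_sub (hmeas1set _), h1]
    rw [show (1 / 2 - Δ : ℝ) = 1 - (1 / 2 + Δ) by ring,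
      ENNReal.ofReal_sub _ (by positivity), ENNReal.ofReal_one]
  have hμ0b : ∀ b : Fin A, b ≠ z → μ (X (b, (b : ℕ) + 1) ⁻¹' ({0} : Set ℝ))
      = ENNReal.ofReal (1 / 2) := by
    intro b hb
    have h1 : μ (X (b, (b : ℕ) + 1) ⁻¹' ({1} : Set ℝ)) = ENNReal.ofReal (1 / 2) :=
      hmean2 b hb ((b : ℕ) + 1)
    rw [hcomp, prob_compl_eq_one_sub (hmeas1set _), h1, ← ENNReal.ofReal_one,
      ← ENNReal.ofReal_sub _ (by norm_num)]
    norm_num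
  have hprod : ∀ S' : Finset (Fin A × ℕ),
      μ (⋂ p ∈ S', X p ⁻¹' ({0} : Set ℝ)) = ∏ p ∈ S', μ (X p ⁻¹' ({0} : Set ℝ)) := fun S' =>
    (iIndepFun_iff_measure_inter_preimage_eq_mul.mp hindep) S'
      (sets := fun _ => ({0} : Set ℝ)) (fun p _ => measurableSet_singleton 0)
  set S : Finset (Fin A × ℕ) := (Finset.univ.erase z).image (fun b : Fin A => (b, (b : ℕ) + 1))
    with hS
  have hprodS : ∏ p ∈ S, μ (X p ⁻¹' ({0} : Set ℝ)) = ENNReal.ofReal ((1 / 2 : ℝ) ^ (A - 1)) := by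
    rw [hS, Finset.prod_image (fun b _ c _ h => (congrArg Prod.fst h : b = c))]
    rw [Finset.prod_congr rfl (fun b hb => hμ0b b (Finset.ne_of_mem_erase hb))]
    rw [Finset.prod_const, Finset.card_erase_of_mem (Finset.mem_univ z), Finset.card_univ,
      Fintype.card_fin, ← ENNReal.ofReal_pow (by norm_num)]
  set F : Set Ω := ⋂ b ∈ Finset.univ.erase z, X (b, (b : ℕ) + 1) ⁻¹' ({0} : Set ℝ) with hF
  have hFmeas : MeasurableSet F :=
    Finset.measurableSet_biInter _ (fun b _ => hmeas0set _)
  have hFS : F = ⋂ p ∈ S, X p ⁻¹' ({0} : Set ℝ) := by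
    rw [hF, hS]
    ext ω
    simp only [Set.mem_iInter, Finset.mem_image, Finset.mem_erase, Finset.mem_univ, and_true]
    constructor
    · rintro h p ⟨b, hb, rfl⟩
      exact h b hb
    · intro h b hb
      exact h (b, (b : ℕ) + 1) ⟨b, hb, rfl⟩
  have hμF : μ F = ENNReal.ofReal ((1 / 2 : ℝ) ^ (A - 1)) := by rw [hFS, hprod, hprodS]
  have hE1F : μ (X (z, 1) ⁻¹' ({0} : Set ℝ) ∩ F)
      = ENNReal.ofReal (1 / 2 - Δ) * ENNReal.ofReal ((1 / 2 : ℝ) ^ (A - 1)) := by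
    have hzS : (z, 1) ∉ S := by
      rw [hS]
      simp only [Finset.mem_image]
      rintro ⟨b, hb, heq⟩
      exact Finset.ne_of_mem_erase hb (congrArg Prod.fst heq)
    have h3 : X (z, 1) ⁻¹' ({0} : Set ℝ) ∩ F = ⋂ p ∈ insert (z, 1) S, X p ⁻¹' ({0} : Set ℝ) := by
      rw [Finset.set_biInter_insert, hFS]
    rw [h3, hprod, Finset.prod_insert hzS, hμ0z, hprodS]
  set E : Set Ω := X (z, 1) ⁻¹' ({0} : Set ℝ) \ F with hE
  have hEmeas : MeasurableSet E := (hmeas0set _).diff hFmeas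
  have hμE : μ E = ENNReal.ofReal (1 / 2 - Δ)
      - ENNReal.ofReal (1 / 2 - Δ) * ENNReal.ofReal ((1 / 2 : ℝ) ^ (A - 1)) := by
    have h1 : E = X (z, 1) ⁻¹' ({0} : Set ℝ) \ (X (z, 1) ⁻¹' ({0} : Set ℝ) ∩ F) := by
      rw [hE, Set.diff_self_inter]
    rw [h1, measure_diff Set.inter_subset_left ((hmeas0set _).inter hFmeas).nullMeasurableSet
      (measure_ne_top μ _), hE1F, hμ0z]
  have hhalf : (0 : ℝ) ≤ 1 / 2 - Δ := by linarith
  have hq0 : (0 : ℝ) ≤ (1 / 2 : ℝ) ^ (A - 1) := by positivity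
  have hqle1 : ((1 : ℝ) / 2) ^ (A - 1) ≤ 1 := pow_le_one₀ (by norm_num) (by norm_num)
  have hpE : (μ E).toReal = (1 / 2 - Δ) * (1 - (1 / 2 : ℝ) ^ (A - 1)) := by
    have hle : ENNReal.ofReal (1 / 2 - Δ) * ENNReal.ofReal ((1 / 2 : ℝ) ^ (A - 1))
        ≤ ENNReal.ofReal (1 / 2 - Δ) := by
      calc ENNReal.ofReal (1 / 2 - Δ) * ENNReal.ofReal ((1 / 2 : ℝ) ^ (A - 1))
          ≤ ENNReal.ofReal (1 / 2 - Δ) * 1 :=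
            mul_le_mul_right (ENNReal.ofReal_le_one.mpr hqle1) _
        _ = _ := mul_one _
    rw [hμE, ENNReal.toReal_sub_of_le hle ENNReal.ofReal_ne_top, ENNReal.toReal_mul,
      ENNReal.toReal_ofReal hhalf, ENNReal.toReal_ofReal hq0]
    ring
  -- E is contained in each "suboptimal pull" event
  have hEsub : ∀ t, A < t → E ⊆ {ω | aSel t ω ≠ z} := by
    intro t ht ω hω
    have h0' : X (z, 1) ω = 0 := hω.1
    have hb : ∃ b : Fin A, b ≠ z ∧ X (b, (b : ℕ) + 1) ω = 1 := by
      by_contra hc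
      push_neg at hc
      apply hω.2
      rw [hF]
      simp only [Set.mem_iInter]
      intro b hb
      rcases hX01 (b, (b : ℕ) + 1) ω with h | h
      · exact h
      · exact absurd h (hc b (Finset.ne_of_mem_erase hb))
    exact hdet ω h0' hb t ht
  -- integral computations
  have hSetmeas : ∀ t, 1 ≤ t → MeasurableSet {ω | aSel t ω ≠ z} := fun t ht =>
    ((hmeas_a t ht) (measurableSet_singleton z)).compl
  have hfun : ∀ t, 1 ≤ t → (fun ω => (1 / 2 + Δ) - (if aSel t ω = z then 1 / 2 + Δ else 1 / 2))
      = fun ω => Set.indicator {ω | aSel t ω ≠ z} (fun _ => Δ) ω := by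
    intro t ht
    funext ω
    by_cases h : aSel t ω = z
    · rw [if_pos h, Set.indicator_of_notMem (show ω ∉ {ω | aSel t ω ≠ z} from fun hh => hh h)]
      ring
    · rw [if_neg h, Set.indicator_of_mem (show ω ∈ {ω | aSel t ω ≠ z} from h)]
      ring
  have hint : ∀ t ∈ Finset.Icc 1 T,
      Integrable (fun ω => (1 / 2 + Δ) - (if aSel t ω = z then 1 / 2 + Δ else 1 / 2)) μ := by
    intro t htmem
    rw [Finset.mem_Icc] at htmem
    rw [hfun t htmem.1]
    exact (integrable_const Δ).indicator (hSetmeas t htmem.1)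
  have hival : ∀ t, 1 ≤ t →
      ∫ ω, ((1 / 2 + Δ) - (if aSel t ω = z then 1 / 2 + Δ else 1 / 2)) ∂μ
        = (μ {ω | aSel t ω ≠ z}).toReal * Δ := by
    intro t ht
    rw [hfun t ht, integral_indicator_const Δ (hSetmeas t ht), smul_eq_mul]
    rfl
  rw [integral_finset_sum _ hint]
  have hstep : ∀ t ∈ Finset.Icc (A + 1) T, (μ E).toReal * Δ
      ≤ ∫ ω, ((1 / 2 + Δ) - (if aSel t ω = z then 1 / 2 + Δ else 1 / 2)) ∂μ := by
    intro t htmem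
    rw [Finset.mem_Icc] at htmem
    rw [hival t (by omega)]
    have hmono : (μ E).toReal ≤ (μ {ω | aSel t ω ≠ z}).toReal :=
      ENNReal.toReal_mono (measure_ne_top μ _) (measure_mono (hEsub t (by omega)))
    exact mul_le_mul_of_nonneg_right hmono hΔ0.le
  have hcard : (Finset.Icc (A + 1) T).card = T - A := by rw [Nat.card_Icc]; omega
  calc (1 / 2 - Δ) * (1 - (1 / 2 : ℝ) ^ (A - 1)) * Δ * ((T : ℝ) - A)
      = ((T - A : ℕ) : ℝ) * ((μ E).toReal * Δ) := by
        rw [hpE, Nat.cast_sub hT]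
        ring
    _ ≤ ∑ t ∈ Finset.Icc (A + 1) T,
          ∫ ω, ((1 / 2 + Δ) - (if aSel t ω = z then 1 / 2 + Δ else 1 / 2)) ∂μ := by
        calc ((T - A : ℕ) : ℝ) * ((μ E).toReal * Δ)
            = ∑ _t ∈ Finset.Icc (A + 1) T, (μ E).toReal * Δ := by
              rw [Finset.sum_const, hcard, nsmul_eq_mul]
          _ ≤ _ := Finset.sum_le_sum hstep
    _ ≤ ∑ t ∈ Finset.Icc 1 T,
          ∫ ω, ((1 / 2 + Δ) - (if aSel t ω = z then 1 / 2 + Δ else 1 / 2)) ∂μ := by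
        refine Finset.sum_le_sum_of_subset_of_nonneg
          (Finset.Icc_subset_Icc (by omega) le_rfl) ?_
        intro t htmem _
        rw [Finset.mem_Icc] at htmem
        rw [hival t htmem.1]
        exact mul_nonneg ENNReal.toReal_nonneg hΔ0.le
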